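/- (Lemma 2, case 2 with μ ≥ 1.) Let μ ≥ 1, ν ∈ (0,1), w_c, w_d > 0 with w_c + w_d = 1, and assume w_c/μ ≥ w_d/ν. Define f(p,β) = w_c ln(pμ + (1−p)β) + w_d ln(pν + (1−p)(1−β)). Then for all (p,β) ∈ [0,1]² with pμ + (1−p)β > 0 and pν + (1−p)(1−β) > 0, we have f(p,β) ≤ w_c ln μ + w_d ln ν; i.e., the maximum is attained at p = 1 with arbitrary β ∈ [0,1]. -/
import Mathlib


theorem stmt_11 (μ ν wc wd : ℝ) (hμ : 1 ≤ μ) (hν : ν ∈ Set.Ioo (0 : ℝ) 1)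
    (hwc : 0 < wc) (hwd : 0 < wd) (hw : wc + wd = 1)
    (hratio : wd / ν ≤ wc / μ) :
    ∀ p ∈ Set.Icc (0 : ℝ) 1, ∀ β ∈ Set.Icc (0 : ℝ) 1,
      0 < p * μ + (1 - p) * β → 0 < p * ν + (1 - p) * (1 - β) →
      wc * Real.log (p * μ + (1 - p) * β) + wd * Real.log (p * ν + (1 - p) * (1 - β))
        ≤ wc * Real.log μ + wd * Real.log ν := by
  obtain ⟨hν0, hν1⟩ := hν
  intro p hp β hβ hA hB
  obtain ⟨hp0, hp1⟩ := hp
  obtain ⟨hβ0, hβ1⟩ := hβ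
  have hμ0 : (0:ℝ) < μ := by linarith
  set A := p * μ + (1 - p) * β with hAdef
  set B := p * ν + (1 - p) * (1 - β) with hBdef
  have h1 : Real.log A - Real.log μ ≤ A / μ - 1 := by
    have := Real.log_le_sub_one_of_pos (show 0 < A / μ from div_pos hA hμ0)
    rwa [Real.log_div hA.ne' hμ0.ne'] at this
  have h2 : Real.log B - Real.log ν ≤ B / ν - 1 := by
    have := Real.log_le_sub_one_of_pos (div_pos hB hν0)
    rwa [Real.log_div hB.ne' hν0.ne'] at this
  have key : wc * (A / μ) + wd * (B / ν) ≤ 1 := by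
    have e : wc * (A / μ) + wd * (B / ν)
        = p * (wc + wd) + (1 - p) * (β * (wc / μ) + (1 - β) * (wd / ν)) := by
      field_simp
      ring
    rw [e, hw]
    have hwcμ : wc / μ ≤ 1 := by
      rw [div_le_one hμ0]; linarith
    have h3 : β * (wc / μ) + (1 - β) * (wd / ν) ≤ 1 := by
      nlinarith [div_pos hwd hν0]
    nlinarith
  nlinarith [mul_le_mul_of_nonneg_left h1 hwc.le, mul_le_mul_of_nonneg_left h2 hwd.le]
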